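/- Let f : E → ℝ be Lipschitz with constant L ≥ 0 and let x ∈ E. Then Γf(x) = 0 if and only if x is Clarke-critical for f, i.e. 0 ∈ ∂f(x). -/

import Mathlib

open Filter Topology Metric Set
open scoped Classical

variable {E : Type*} [NormedAddCommGroup E] [InnerProductSpace ℝ E] [FiniteDimensional ℝ E]

/-- The Clarke subdifferential: the closed convex hull of all limits of gradients
along sequences of points of differentiability converging to `x`. -/
noncomputable def clarkeSubdiff (f : E → ℝ) (x : E) : Set E :=
  closure (convexHull ℝ {v : E | ∃ u : ℕ → E,
    (∀ n, DifferentiableAt ℝ f (u n)) ∧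
    Tendsto u atTop (𝓝 x) ∧
    Tendsto (fun n => gradient f (u n)) atTop (𝓝 v)})

/-- The Goldstein subdifferential of radius `ε`. -/
noncomputable def goldsteinSubdiff (f : E → ℝ) (x : E) (ε : ℝ) : Set E :=
  convexHull ℝ (⋃ y ∈ Metric.closedBall x ε, clarkeSubdiff f y)

/-- The element of minimal norm of a set (junk value `0` if no minimizer exists). -/
noncomputable def minNorm (s : Set E) : E :=
  if h : ∃ v, v ∈ s ∧ ∀ w ∈ s, ‖v‖ ≤ ‖w‖ then h.choose else 0

/-- The Goldstein subgradient: the minimal-norm element of the Goldstein subdifferential. -/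
noncomputable def goldsteinGrad (f : E → ℝ) (x : E) (ε : ℝ) : E :=
  minNorm (goldsteinSubdiff f x ε)

/-- The Goldstein modulus `Γf(x) = inf {ε ≥ 0 : ‖g_ε(x)‖ ≤ ε}`. -/
noncomputable def goldsteinModulus (f : E → ℝ) (x : E) : ℝ :=
  sInf {ε : ℝ | 0 ≤ ε ∧ ‖goldsteinGrad f x ε‖ ≤ ε}

open MeasureTheory

set_option linter.unnecessarySimpa false
set_option linter.unusedSectionVars false

theorem isCompact_convexHull' {s : Set E} (hs : IsCompact s) :
    IsCompact (convexHull ℝ s) := by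
  rcases s.eq_empty_or_nonempty with rfl | ⟨z₀, hz₀⟩
  · simpa using isCompact_empty
  classical
  set n := Module.finrank ℝ E + 1 with hn
  have hmap : convexHull ℝ s =
      (fun p : (Fin n → ℝ) × (Fin n → E) => ∑ i, p.1 i • p.2 i) ''
        (stdSimplex ℝ (Fin n) ×ˢ univ.pi fun _ : Fin n => s) := by
    apply Subset.antisymm
    · intro x hx
      obtain ⟨ι, hι, z, w, hzs, hai, hw0, hw1, hwz⟩ :=
        eq_pos_convex_span_of_mem_convexHull hx
      letI := hι
      have hcard : Fintype.card ι ≤ n := by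
        have h1 := hai.card_le_finrank_succ
        have h2 := Submodule.finrank_le (vectorSpan ℝ (Set.range z))
        omega
      obtain ⟨e⟩ : Nonempty (ι ↪ Fin n) :=
        Function.Embedding.nonempty_of_card_le (by simpa using hcard)
      set w' : Fin n → ℝ := fun j => if h : ∃ i, e i = j then w h.choose else 0 with hw'
      set z' : Fin n → E := fun j => if h : ∃ i, e i = j then z h.choose else z₀ with hz'
      have hwe : ∀ i : ι, w' (e i) = w i := by
        intro i
        have h : ∃ i', e i' = e i := ⟨i, rfl⟩
        have hch : h.choose = i := e.injective h.choose_spec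
        simp [hw', dif_pos h, hch]
      have hze : ∀ i : ι, z' (e i) = z i := by
        intro i
        have h : ∃ i', e i' = e i := ⟨i, rfl⟩
        have hch : h.choose = i := e.injective h.choose_spec
        simp [hz', dif_pos h, hch]
      have hvanish : ∀ j : Fin n, j ∉ Finset.univ.map e → w' j = 0 := by
        intro j hj
        have : ¬ ∃ i, e i = j := by
          intro ⟨i, hi⟩
          exact hj (Finset.mem_map.2 ⟨i, Finset.mem_univ _, hi⟩)
        simp [hw', dif_neg this]
      have hsum1 : ∑ j, w' j = 1 := by
        rw [← Finset.sum_subset (Finset.subset_univ (Finset.univ.map e))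
          (fun j _ hj => hvanish j hj)]
        rw [Finset.sum_map]
        simpa [hwe] using hw1
      have hsum2 : ∑ j, w' j • z' j = x := by
        rw [← Finset.sum_subset (Finset.subset_univ (Finset.univ.map e))
          (fun j _ hj => by rw [hvanish j hj, zero_smul])]
        rw [Finset.sum_map, ← hwz]
        exact Finset.sum_congr rfl fun i _ => by rw [hwe, hze]
      refine ⟨(w', z'), ⟨⟨?_, hsum1⟩, ?_⟩, hsum2⟩
      · intro j
        by_cases h : ∃ i, e i = j
        · simp only [hw', dif_pos h]; exact (hw0 _).le
        · simp [hw', dif_neg h]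
      · intro j _
        by_cases h : ∃ i, e i = j
        · simp only [hz', dif_pos h]; exact hzs ⟨_, rfl⟩
        · simpa [hz', dif_neg h] using hz₀
    · rintro x ⟨⟨w, z⟩, ⟨hw, hz⟩, rfl⟩
      exact (convex_convexHull ℝ s).sum_mem (fun i _ => hw.1 i) hw.2
        (fun i _ => subset_convexHull ℝ s (hz i (mem_univ i)))
  rw [hmap]
  refine ((isCompact_stdSimplex _ _).prod (isCompact_univ_pi fun _ => hs)).image ?_
  exact continuous_finset_sum _ fun i _ =>
    ((continuous_apply i).comp continuous_fst).smul ((continuous_apply i).comp continuous_snd)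

def Gset (f : E → ℝ) (x : E) : Set E :=
  {v : E | ∃ u : ℕ → E, (∀ n, DifferentiableAt ℝ f (u n)) ∧
    Tendsto u atTop (𝓝 x) ∧ Tendsto (fun n => gradient f (u n)) atTop (𝓝 v)}

theorem grad_norm_le {f : E → ℝ} {L : ℝ} (hL : 0 ≤ L) (hf : LipschitzWith L.toNNReal f)
    {y : E} (hy : DifferentiableAt ℝ f y) : ‖gradient f y‖ ≤ L := by
  have h1 : ‖fderiv ℝ f y‖ ≤ L := by
    have := hy.hasFDerivAt.le_of_lipschitz hf
    simpa [Real.coe_toNNReal L hL] using this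
  rw [gradient, LinearIsometryEquiv.norm_map]
  exact h1

theorem Gset_subset {f : E → ℝ} {L : ℝ} (hL : 0 ≤ L) (hf : LipschitzWith L.toNNReal f)
    (y : E) : Gset f y ⊆ closedBall (0 : E) L := by
  rintro v ⟨u, hdiff, -, hgrad⟩
  rw [mem_closedBall, dist_zero_right]
  exact le_of_tendsto hgrad.norm
    (Eventually.of_forall fun n => grad_norm_le hL hf (hdiff n))

theorem one_div_succ_tendsto : Tendsto (fun k : ℕ => 1 / ((k : ℝ) + 1)) atTop (𝓝 0) :=
  tendsto_one_div_add_atTop_nhds_zero_nat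

theorem Gset_graph {f : E → ℝ} {y : E} {ys : ℕ → E} {vs : ℕ → E} {v : E}
    (hy : Tendsto ys atTop (𝓝 y)) (hv : Tendsto vs atTop (𝓝 v))
    (hmem : ∀ k, vs k ∈ Gset f (ys k)) : v ∈ Gset f y := by
  have key : ∀ k : ℕ, ∃ p : E, DifferentiableAt ℝ f p ∧ dist p (ys k) < 1 / ((k : ℝ) + 1) ∧
      dist (gradient f p) (vs k) < 1 / ((k : ℝ) + 1) := by
    intro k
    obtain ⟨u, hdiff, hu, hgrad⟩ := hmem k
    have hpos : (0 : ℝ) < 1 / ((k : ℝ) + 1) := by positivity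
    obtain ⟨N1, hN1⟩ := (Metric.tendsto_atTop.1 hu) _ hpos
    obtain ⟨N2, hN2⟩ := (Metric.tendsto_atTop.1 hgrad) _ hpos
    exact ⟨u (max N1 N2), hdiff _, hN1 _ (le_max_left _ _), hN2 _ (le_max_right _ _)⟩
  choose p hdiff hclose hgclose using key
  have haux : ∀ (q : ℕ → E) (a : E) (w : ℕ → E) (b : E), Tendsto w atTop (𝓝 b) →
      (∀ k, dist (q k) (w k) < 1 / ((k : ℝ) + 1)) → Tendsto q atTop (𝓝 b) := by
    intro q a w b hw hd
    rw [tendsto_iff_dist_tendsto_zero]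
    apply squeeze_zero (fun k => dist_nonneg)
      (g := fun k : ℕ => 1 / ((k : ℝ) + 1) + dist (w k) b)
    · intro k
      exact (dist_triangle _ _ _).trans (by gcongr; exact (hd k).le)
    · simpa using one_div_succ_tendsto.add (tendsto_iff_dist_tendsto_zero.1 hw)
  exact ⟨p, hdiff, haux p y ys y hy hclose,
    haux (fun k => gradient f (p k)) v vs v hv hgclose⟩

theorem Gset_nonempty {f : E → ℝ} {L : ℝ} (hL : 0 ≤ L) (hf : LipschitzWith L.toNNReal f)
    (y : E) : (Gset f y).Nonempty := by
  borelize E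
  have hdense : ∀ k : ℕ, ∃ p, DifferentiableAt ℝ f p ∧ dist p y < 1 / ((k : ℝ) + 1) := by
    intro k
    have hpos : (0 : ℝ) < 1 / ((k : ℝ) + 1) := by positivity
    by_contra h
    push_neg at h
    have hsub : Metric.ball y (1 / ((k : ℝ) + 1)) ⊆ {p | ¬ DifferentiableAt ℝ f p} := by
      intro p hp hd
      exact absurd (mem_ball.1 hp) (not_lt.2 (h p hd))
    have hae := hf.ae_differentiableAt (μ := Measure.addHaar)
    rw [MeasureTheory.ae_iff] at hae
    have h0 : Measure.addHaar (Metric.ball y (1 / ((k : ℝ) + 1))) = 0 :=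
      measure_mono_null hsub hae
    exact (measure_ball_pos Measure.addHaar y hpos).ne' h0
  choose p hdiffp hclose using hdense
  have hp : Tendsto p atTop (𝓝 y) := by
    rw [tendsto_iff_dist_tendsto_zero]
    exact squeeze_zero (fun k => dist_nonneg) (fun k => (hclose k).le) one_div_succ_tendsto
  have hbd : ∀ k, gradient f (p k) ∈ closedBall (0 : E) L := by
    intro k
    rw [mem_closedBall, dist_zero_right]
    exact grad_norm_le hL hf (hdiffp k)
  obtain ⟨a, -, φ, hφ, ha⟩ := tendsto_subseq_of_bounded isBounded_closedBall hbd
  exact ⟨a, p ∘ φ, fun k => hdiffp _, hp.comp hφ.tendsto_atTop, ha⟩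

theorem Gset_isClosed (f : E → ℝ) (y : E) : IsClosed (Gset f y) := by
  refine IsSeqClosed.isClosed ?_
  intro vs v hmem hv
  exact Gset_graph tendsto_const_nhds hv hmem

theorem Gset_isCompact {f : E → ℝ} {L : ℝ} (hL : 0 ≤ L) (hf : LipschitzWith L.toNNReal f)
    (y : E) : IsCompact (Gset f y) :=
  (isCompact_closedBall _ _).of_isClosed_subset (Gset_isClosed f y) (Gset_subset hL hf y)
/-- The union of `Gset`s over a closed ball. -/
def Uset (f : E → ℝ) (x : E) (ε : ℝ) : Set E := ⋃ y ∈ closedBall x ε, Gset f y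

theorem Uset_subset {f : E → ℝ} {L : ℝ} (hL : 0 ≤ L) (hf : LipschitzWith L.toNNReal f)
    (x : E) (ε : ℝ) : Uset f x ε ⊆ closedBall (0 : E) L :=
  iUnion₂_subset fun y _ => Gset_subset hL hf y

theorem Uset_mono (f : E → ℝ) (x : E) {ε δ : ℝ} (h : ε ≤ δ) : Uset f x ε ⊆ Uset f x δ :=
  iUnion₂_mono' fun y hy => ⟨y, closedBall_subset_closedBall h hy, subset_rfl⟩

theorem Uset_isClosed (f : E → ℝ) (x : E) (ε : ℝ) : IsClosed (Uset f x ε) := by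
  refine IsSeqClosed.isClosed ?_
  intro vs v hmem hv
  have hys : ∀ k, ∃ y ∈ closedBall x ε, vs k ∈ Gset f y := by
    intro k; simpa [Uset, mem_iUnion₂] using hmem k
  choose ys hysball hysmem using hys
  obtain ⟨y, hy, φ, hφ, hyy⟩ := (isCompact_closedBall x ε).tendsto_subseq hysball
  exact mem_iUnion₂.2 ⟨y, hy, Gset_graph hyy (hv.comp hφ.tendsto_atTop) fun k => hysmem (φ k)⟩

theorem Uset_isCompact {f : E → ℝ} {L : ℝ} (hL : 0 ≤ L) (hf : LipschitzWith L.toNNReal f)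
    (x : E) (ε : ℝ) : IsCompact (Uset f x ε) :=
  (isCompact_closedBall _ _).of_isClosed_subset (Uset_isClosed f x ε) (Uset_subset hL hf x ε)

theorem Uset_nonempty {f : E → ℝ} {L : ℝ} (hL : 0 ≤ L) (hf : LipschitzWith L.toNNReal f)
    (x : E) {ε : ℝ} (hε : 0 ≤ ε) : (Uset f x ε).Nonempty := by
  obtain ⟨v, hv⟩ := Gset_nonempty hL hf x
  exact ⟨v, mem_iUnion₂.2 ⟨x, mem_closedBall_self hε, hv⟩⟩

theorem clarke_eq {f : E → ℝ} {L : ℝ} (hL : 0 ≤ L) (hf : LipschitzWith L.toNNReal f)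
    (y : E) : clarkeSubdiff f y = convexHull ℝ (Gset f y) := by
  rw [clarkeSubdiff]
  exact IsClosed.closure_eq (isCompact_convexHull' (Gset_isCompact hL hf y)).isClosed

theorem goldstein_eq {f : E → ℝ} {L : ℝ} (hL : 0 ≤ L) (hf : LipschitzWith L.toNNReal f)
    (x : E) (ε : ℝ) : goldsteinSubdiff f x ε = convexHull ℝ (Uset f x ε) := by
  rw [goldsteinSubdiff]
  apply Subset.antisymm
  · apply convexHull_min _ (convex_convexHull ℝ _)
    refine iUnion₂_subset fun y hy => ?_
    rw [clarke_eq hL hf y]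
    exact convexHull_mono (subset_iUnion₂_of_subset y hy subset_rfl)
  · refine convexHull_mono (iUnion₂_mono fun y hy => ?_)
    rw [clarke_eq hL hf y]
    exact subset_convexHull ℝ _


theorem minNorm_spec {s : Set E} (hne : s.Nonempty) (hc : IsCompact s) :
    minNorm s ∈ s ∧ ∀ w ∈ s, ‖minNorm s‖ ≤ ‖w‖ := by
  obtain ⟨v, hv, hmin⟩ := hc.exists_isMinOn hne continuous_norm.continuousOn
  have h : ∃ v, v ∈ s ∧ ∀ w ∈ s, ‖v‖ ≤ ‖w‖ := ⟨v, hv, fun w hw => hmin hw⟩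
  rw [minNorm, dif_pos h]
  exact h.choose_spec

theorem minNorm_le {s : Set E} {c : ℝ} (h0 : (0:E) ∈ s) (hc : 0 ≤ c) : ‖minNorm (s : Set E)‖ ≤ c := by
  rw [minNorm]
  split_ifs with h
  · exact le_trans (by simpa using h.choose_spec.2 0 h0) hc
  · simpa using hc

theorem stmt3 (f : E → ℝ) (L : ℝ) (hL : 0 ≤ L) (hf : LipschitzWith L.toNNReal f) (x : E) :
    goldsteinModulus f x = 0 ↔ (0 : E) ∈ clarkeSubdiff f x := by
  set S := {ε : ℝ | 0 ≤ ε ∧ ‖goldsteinGrad f x ε‖ ≤ ε} with hS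
  have hbdd : BddBelow S := ⟨0, fun ε hε => hε.1⟩
  -- basic facts about the Goldstein subgradient for ε ≥ 0
  have hconv_cpt : ∀ ε : ℝ, IsCompact (convexHull ℝ (Uset f x ε)) :=
    fun ε => isCompact_convexHull' (Uset_isCompact hL hf x ε)
  have hg_mem : ∀ {ε : ℝ}, 0 ≤ ε → goldsteinGrad f x ε ∈ convexHull ℝ (Uset f x ε) := by
    intro ε hε
    have hne : (convexHull ℝ (Uset f x ε)).Nonempty :=
      (Uset_nonempty hL hf x hε).mono (subset_convexHull ℝ _)
    have := (minNorm_spec hne (hconv_cpt ε)).1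
    rwa [goldsteinGrad, goldstein_eq hL hf x ε]
  have hconv_sub : ∀ ε : ℝ, convexHull ℝ (Uset f x ε) ⊆ closedBall (0:E) L :=
    fun ε => convexHull_min (Uset_subset hL hf x ε) (convex_closedBall _ _)
  constructor
  · -- hard direction
    intro h
    have hLS : L ∈ S := by
      refine ⟨hL, ?_⟩
      have := hconv_sub L (hg_mem hL)
      rwa [mem_closedBall, dist_zero_right] at this
    have hModS : sInf S = 0 := h
    -- choose ε k ∈ S with ε k < 1/(k+1)
    have hek : ∀ k : ℕ, ∃ ε ∈ S, ε < 1 / ((k : ℝ) + 1) := by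
      intro k
      apply exists_lt_of_csInf_lt ⟨L, hLS⟩
      rw [hModS]; positivity
    choose ε hεS hεlt using hek
    set g : ℕ → E := fun k => goldsteinGrad f x (ε k) with hg
    have hgtend : Tendsto g atTop (𝓝 0) := by
      rw [tendsto_iff_dist_tendsto_zero]
      refine squeeze_zero (fun k => dist_nonneg) (fun k => ?_) one_div_succ_tendsto
      rw [dist_zero_right]
      exact ((hεS k).2.trans (hεlt k).le)
    -- 0 lies in each convexHull (Uset f x δ), δ > 0
    have hδ : ∀ δ : ℝ, 0 < δ → (0 : E) ∈ convexHull ℝ (Uset f x δ) := by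
      intro δ hδpos
      refine (hconv_cpt δ).isClosed.mem_of_tendsto hgtend ?_
      obtain ⟨K, hK⟩ := exists_nat_one_div_lt hδpos
      refine eventually_atTop.2 ⟨K, fun k hk => ?_⟩
      have h1 : ε k < δ := by
        refine (hεlt k).trans (lt_of_le_of_lt ?_ hK)
        · apply one_div_le_one_div_of_le <;> push_cast <;> [positivity; simpa using hk]
      exact convexHull_mono (Uset_mono f x h1.le) (hg_mem (hεS k).1)
    -- conclude via Hahn–Banach
    have hGc : IsCompact (convexHull ℝ (Gset f x)) := isCompact_convexHull' (Gset_isCompact hL hf x)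
    by_contra h0
    rw [clarke_eq hL hf x] at h0
    obtain ⟨ℓ, u, hlt, hu⟩ :=
      geometric_hahn_banach_closed_point (convex_convexHull ℝ _) hGc.isClosed h0
    rw [map_zero] at hu
    -- for each k, find a maximizer of ℓ on Uset f x (1/(k+1))
    have hmax : ∀ k : ℕ, ∃ a ∈ Uset f x (1 / ((k:ℝ)+1)), IsMaxOn ℓ (Uset f x (1 / ((k:ℝ)+1))) a := by
      intro k
      exact (Uset_isCompact hL hf x _).exists_isMaxOn
        (Uset_nonempty hL hf x (by positivity)) ℓ.continuous.continuousOn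
    choose a hamem hamax using hmax
    have hge : ∀ k : ℕ, 0 ≤ ℓ (a k) := by
      intro k
      have hsub : convexHull ℝ (Uset f x (1 / ((k:ℝ)+1))) ⊆ {z | ℓ z ≤ ℓ (a k)} :=
        convexHull_min (fun w hw => hamax k hw) (convex_halfSpace_le ⟨ℓ.map_add, ℓ.map_smul⟩ _)
      have := hsub (hδ _ (by positivity))
      simpa using this
    -- extract y k and converge
    have hya : ∀ k : ℕ, ∃ y, dist y x ≤ 1 / ((k:ℝ)+1) ∧ a k ∈ Gset f y := by
      intro k
      obtain ⟨y, hy1, hy2⟩ := mem_iUnion₂.1 (hamem k)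
      exact ⟨y, mem_closedBall.1 hy1, hy2⟩
    choose ys hysd hysmem using hya
    have hytend : Tendsto ys atTop (𝓝 x) := by
      rw [tendsto_iff_dist_tendsto_zero]
      exact squeeze_zero (fun k => dist_nonneg) hysd one_div_succ_tendsto
    have habd : ∀ k, a k ∈ closedBall (0:E) L := fun k => Gset_subset hL hf (ys k) (hysmem k)
    obtain ⟨aLim, -, φ, hφ, haLim⟩ := tendsto_subseq_of_bounded isBounded_closedBall habd
    have haLimG : aLim ∈ Gset f x :=
      Gset_graph (hytend.comp hφ.tendsto_atTop) haLim fun k => hysmem (φ k)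
    have h1 : 0 ≤ ℓ aLim :=
      ge_of_tendsto (ℓ.continuous.continuousAt.tendsto.comp haLim)
        (Eventually.of_forall fun k => hge (φ k))
    have h2 : ℓ aLim < u := hlt aLim (subset_convexHull ℝ _ haLimG)
    linarith
  · -- easy direction
    intro h
    have h0S : (0:ℝ) ∈ S := by
      refine ⟨le_rfl, ?_⟩
      have h0g : (0:E) ∈ goldsteinSubdiff f x 0 :=
        subset_convexHull ℝ _ (mem_iUnion₂.2 ⟨x, mem_closedBall_self le_rfl, h⟩)
      exact minNorm_le h0g le_rfl
    exact le_antisymm (csInf_le hbdd h0S) (le_csInf ⟨0, h0S⟩ fun ε hε => hε.1)
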